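/- The initialisation round function IR is a bijection on F₂^L, and its inverse is efficiently computable: given w = IR(u), the bits of u are recovered as u_i = w_{i−1} ⊕ d_{i−1}·b for i = L−1,…,1 and u₀ = w_{L−1} ⊕ c ⊕ b, where b and c are determined by w. -/
import Mathlib


/-- The linear next-bit map nb(u) = ⊕ cᵢ uᵢ of the LFSR. -/
def nbF (L : ℕ) (cvec : Fin L → ZMod 2) (u : Fin L → ZMod 2) : ZMod 2 :=
  ∑ i, cvec i * u i

/-- The initialisation round function: clock the LFSR once and XOR the filter
output bit b = filt(u) into the positions where d is 1.  Bit j of the new state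
is u_{j+1} + d_j·b for j < L-1, and nb(u) + d_{L-1}·b for the top position. -/
def IR (L : ℕ) (cvec d : Fin L → ZMod 2) (filt : (Fin L → ZMod 2) → ZMod 2) :
    (Fin L → ZMod 2) → (Fin L → ZMod 2) :=
  fun u j =>
    (if hj : (j : ℕ) + 1 < L then u ⟨(j : ℕ) + 1, hj⟩ else nbF L cvec u) + d j * filt u

lemma two_cancel (a x : ZMod 2) : a + x + x = a := by
  rw [add_assoc, CharTwo.add_self_eq_zero, add_zero]

/-- The initialisation round function IR is a bijection on F₂^L, and its inverse is
given explicitly: from w = IR(u), one recovers u_i = w_{i-1} ⊕ d_{i-1}·b for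
i = L-1,…,1 and u₀ = w_{L-1} ⊕ c ⊕ b, where b = filt(u) and c = ⊕_{i≥1} cᵢuᵢ. -/
theorem IR_bijective (L : ℕ) (hL : 0 < L) (cvec d : Fin L → ZMod 2)
    (taps : Finset (Fin L)) (filt : (Fin L → ZMod 2) → ZMod 2)
    (hfilt : ∀ u v : Fin L → ZMod 2, (∀ i ∈ taps, u i = v i) → filt u = filt v)
    (hc0 : cvec ⟨0, hL⟩ = 1)
    (h0tap : (⟨0, hL⟩ : Fin L) ∉ taps)
    (hdtop : d ⟨L - 1, by omega⟩ = 1)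
    (hdtap : ∀ (i : ℕ) (hi : i + 1 < L),
      (cvec ⟨i + 1, hi⟩ = 1 ∨ (⟨i + 1, hi⟩ : Fin L) ∈ taps) →
        d ⟨i, by omega⟩ = 0) :
    Function.Bijective (IR L cvec d filt) ∧
    ∀ u : Fin L → ZMod 2,
      (∀ (i : ℕ) (hi : i + 1 < L),
        u ⟨i + 1, hi⟩ = IR L cvec d filt u ⟨i, by omega⟩ + d ⟨i, by omega⟩ * filt u) ∧
      u ⟨0, hL⟩ = IR L cvec d filt u ⟨L - 1, by omega⟩
        + (∑ i ∈ Finset.univ.filter fun i : Fin L => (i : ℕ) ≠ 0, cvec i * u i)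
        + filt u := by
  -- splitting of the sum defining nbF
  have hsplit : ∀ u : Fin L → ZMod 2, nbF L cvec u =
      u ⟨0, hL⟩ + ∑ i ∈ Finset.univ.filter fun i : Fin L => (i : ℕ) ≠ 0, cvec i * u i := by
    intro u
    have h := Finset.sum_filter_add_sum_filter_not Finset.univ
      (fun i : Fin L => (i : ℕ) ≠ 0) (fun i => cvec i * u i)
    have h0 : (Finset.univ.filter fun i : Fin L => ¬ (i : ℕ) ≠ 0) = {⟨0, hL⟩} := by
      ext i
      simp only [Finset.mem_filter, Finset.mem_univ, true_and, Finset.mem_singleton,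
        not_not]
      constructor
      · intro h; exact Fin.ext h
      · intro h; rw [h]
    rw [h0, Finset.sum_singleton, hc0, one_mul] at h
    rw [nbF, ← h, add_comm]
  -- the explicit inverse formulas
  have part2 : ∀ u : Fin L → ZMod 2,
      (∀ (i : ℕ) (hi : i + 1 < L),
        u ⟨i + 1, hi⟩ = IR L cvec d filt u ⟨i, by omega⟩ + d ⟨i, by omega⟩ * filt u) ∧
      u ⟨0, hL⟩ = IR L cvec d filt u ⟨L - 1, by omega⟩
        + (∑ i ∈ Finset.univ.filter fun i : Fin L => (i : ℕ) ≠ 0, cvec i * u i)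
        + filt u := by
    intro u
    constructor
    · intro i hi
      show u ⟨i + 1, hi⟩ =
        ((if hj : i + 1 < L then u ⟨i + 1, hj⟩ else nbF L cvec u)
          + d ⟨i, by omega⟩ * filt u) + d ⟨i, by omega⟩ * filt u
      rw [dif_pos hi, two_cancel]
    · have hnot : ¬ (L - 1 + 1 < L) := by omega
      show u ⟨0, hL⟩ =
        ((if hj : L - 1 + 1 < L then u ⟨L - 1 + 1, hj⟩ else nbF L cvec u)
          + d ⟨L - 1, by omega⟩ * filt u)
        + (∑ i ∈ Finset.univ.filter fun i : Fin L => (i : ℕ) ≠ 0, cvec i * u i)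
        + filt u
      rw [dif_neg hnot, hdtop, one_mul, hsplit u]
      set c := ∑ i ∈ Finset.univ.filter fun i : Fin L => (i : ℕ) ≠ 0, cvec i * u i
      set b := filt u
      have : u ⟨0, hL⟩ + c + b + c + b = u ⟨0, hL⟩ := by
        have h1 : u ⟨0, hL⟩ + c + b + c = u ⟨0, hL⟩ + b := by
          rw [show u ⟨0, hL⟩ + c + b + c = u ⟨0, hL⟩ + b + c + c by ring, two_cancel]
        rw [h1, two_cancel]
      linear_combination -this
  refine ⟨?_, part2⟩
  have inj : Function.Injective (IR L cvec d filt) := by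
    intro u v huv
    -- the filter bit is determined by the image
    have hb : filt u = filt v := by
      apply hfilt
      intro i hi
      have hi0 : (i : ℕ) ≠ 0 := by
        intro h
        exact h0tap (by rwa [show (⟨0, hL⟩ : Fin L) = i from Fin.ext h.symm])
      obtain ⟨j, hj⟩ : ∃ j : ℕ, (i : ℕ) = j + 1 := ⟨(i : ℕ) - 1, by omega⟩
      have hjL : j + 1 < L := hj ▸ i.isLt
      have hieq : i = (⟨j + 1, hjL⟩ : Fin L) := Fin.ext hj
      have hd : d ⟨j, by omega⟩ = 0 := hdtap j hjL (Or.inr (hieq ▸ hi))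
      have e1 := (part2 u).1 j hjL
      have e2 := (part2 v).1 j hjL
      rw [hd, zero_mul, add_zero] at e1 e2
      rw [hieq, e1, e2, huv]
    have hne : ∀ i : Fin L, (i : ℕ) ≠ 0 → u i = v i := by
      intro i hi0
      obtain ⟨j, hj⟩ : ∃ j : ℕ, (i : ℕ) = j + 1 := ⟨(i : ℕ) - 1, by omega⟩
      have hjL : j + 1 < L := hj ▸ i.isLt
      have hieq : i = (⟨j + 1, hjL⟩ : Fin L) := Fin.ext hj
      have e1 := (part2 u).1 j hjL
      have e2 := (part2 v).1 j hjL
      rw [hieq, e1, e2, huv, hb]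
    funext i
    by_cases hi0 : (i : ℕ) = 0
    · have hieq : i = (⟨0, hL⟩ : Fin L) := Fin.ext hi0
      have e1 := (part2 u).2
      have e2 := (part2 v).2
      have hc : (∑ j ∈ Finset.univ.filter fun j : Fin L => (j : ℕ) ≠ 0, cvec j * u j)
          = ∑ j ∈ Finset.univ.filter fun j : Fin L => (j : ℕ) ≠ 0, cvec j * v j := by
        apply Finset.sum_congr rfl
        intro j hjm
        rw [Finset.mem_filter] at hjm
        rw [hne j hjm.2]
      rw [hieq, e1, e2, huv, hb, hc]
    · exact hne i hi0
  exact (Finite.injective_iff_bijective).mp inj
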